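/- arXiv:2305.01639 — 2 statements merged into one kernel-verified Lean document; each statement's English description precedes it below -/
import Mathlib

section
/- The exponential mechanism with privacy parameter ε is ε-differentially private. -/
/-- The output probability of the exponential mechanism with utility `q`, sensitivity
bound `Δ`, and privacy parameter `ε`, on candidate `y` (over a finite candidate set):
proportional to `exp(ε·q(D,y)/(2Δ))`. -/
noncomputable def emProb {D Y : Type*} [Fintype Y] (q : D → Y → ℝ) (Δ ε : ℝ)
    (d : D) (y : Y) : ℝ :=
  Real.exp (ε * q d y / (2 * Δ)) / ∑ y', Real.exp (ε * q d y' / (2 * Δ))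

/-- The exponential mechanism with privacy parameter `ε` is `ε`-differentially private:
for all neighboring datasets `d, d'` and every output `y`,
`Pr[EM_q(d) = y] ≤ e^ε · Pr[EM_q(d') = y]`. -/
theorem exponential_mechanism_dp {D Y : Type*} [Fintype Y] (adj : D → D → Prop)
    (q : D → Y → ℝ) (Δ ε : ℝ) (hΔ : 0 < Δ) (hε : 0 < ε)
    (hsens : ∀ d d', adj d d' → ∀ y, |q d y - q d' y| ≤ Δ) :
    ∀ d d', adj d d' → ∀ y : Y,
      emProb q Δ ε d y ≤ Real.exp ε * emProb q Δ ε d' y := by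
  intro d d' hadj y
  have h2Δ : (0:ℝ) < 2 * Δ := by linarith
  -- numerator bound: for any y, exp(ε q d y /(2Δ)) ≤ exp(ε/2) * exp(ε q d' y /(2Δ))
  have hnum : ∀ z : Y, Real.exp (ε * q d z / (2 * Δ)) ≤
      Real.exp (ε / 2) * Real.exp (ε * q d' z / (2 * Δ)) := by
    intro z
    rw [← Real.exp_add]
    apply Real.exp_le_exp.mpr
    have h := (abs_le.mp (hsens d d' hadj z)).2
    have he : ε / 2 = ε * Δ / (2 * Δ) := by field_simp
    rw [he, ← add_div, div_le_div_iff_of_pos_right h2Δ]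
    nlinarith [hε.le]
  have hnum' : ∀ z : Y, Real.exp (ε * q d' z / (2 * Δ)) ≤
      Real.exp (ε / 2) * Real.exp (ε * q d z / (2 * Δ)) := by
    intro z
    rw [← Real.exp_add]
    apply Real.exp_le_exp.mpr
    have h := (abs_le.mp (hsens d d' hadj z)).1
    have he : ε / 2 = ε * Δ / (2 * Δ) := by field_simp
    rw [he, ← add_div, div_le_div_iff_of_pos_right h2Δ]
    nlinarith [hε.le]
  set S := ∑ y', Real.exp (ε * q d y' / (2 * Δ)) with hS
  set S' := ∑ y', Real.exp (ε * q d' y' / (2 * Δ)) with hS'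
  have hSpos : 0 < S := Finset.sum_pos (fun z _ => Real.exp_pos _) ⟨y, Finset.mem_univ y⟩
  have hS'pos : 0 < S' := Finset.sum_pos (fun z _ => Real.exp_pos _) ⟨y, Finset.mem_univ y⟩
  have hSsum : S' ≤ Real.exp (ε / 2) * S := by
    rw [Finset.mul_sum]
    exact Finset.sum_le_sum fun z _ => hnum' z
  unfold emProb
  rw [div_le_iff₀ hSpos, mul_comm (Real.exp ε), mul_assoc, div_mul_eq_mul_div,
    le_div_iff₀ hS'pos]
  calc Real.exp (ε * q d y / (2 * Δ)) * S'
      ≤ (Real.exp (ε / 2) * Real.exp (ε * q d' y / (2 * Δ))) * (Real.exp (ε / 2) * S) := by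
        apply mul_le_mul (hnum y) hSsum hS'pos.le
        positivity
    _ = Real.exp (ε * q d' y / (2 * Δ)) * (Real.exp ε * S) := by
        have h : Real.exp (ε / 2) * Real.exp (ε / 2) = Real.exp ε := by
          rw [← Real.exp_add]; ring_nf
        rw [← h]; ring
end

section
/- The exponential mechanism with parameter ε is (α, ε²α/2)-Rényi differentially private for every order α > 1. -/
open Real

lemma em_scalar (ε α : ℝ) (hε : 0 < ε) (hα : 1 < α) :
    Real.log ((Real.exp (α*ε) + Real.exp ((1-α)*ε)) / (1 + Real.exp ε))
      ≤ ε^2 * (α^2 - α) / 2 := by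
  set φ : ℝ → ℝ := fun t => ε^2/2*(t^2 - t) - ε*t
      - Real.log (1 + Real.exp ((1-2*t)*ε)) + Real.log (1 + Real.exp ε) with hφ
  set φ' : ℝ → ℝ := fun t => ε^2/2*(2*t-1) - ε
      - (Real.exp ((1-2*t)*ε) * (-2*ε))/(1 + Real.exp ((1-2*t)*ε)) with hφ'
  set φ'' : ℝ → ℝ := fun t => ε^2
      - 4*ε^2*Real.exp ((1-2*t)*ε)/(1 + Real.exp ((1-2*t)*ε))^2 with hφ''
  have hden : ∀ t : ℝ, (0:ℝ) < 1 + Real.exp ((1-2*t)*ε) := fun t => by positivity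
  have hu : ∀ t : ℝ, HasDerivAt (fun t : ℝ => (1-2*t)*ε) (-2*ε) t := by
    intro t
    have h := (((hasDerivAt_id t).const_mul 2).const_sub 1).mul_const ε
    exact h.congr_deriv (by ring)
  have hexp : ∀ t : ℝ, HasDerivAt (fun t : ℝ => Real.exp ((1-2*t)*ε))
      (Real.exp ((1-2*t)*ε) * (-2*ε)) t := fun t => (hu t).exp
  have hlog : ∀ t : ℝ, HasDerivAt (fun t : ℝ => Real.log (1 + Real.exp ((1-2*t)*ε)))
      ((Real.exp ((1-2*t)*ε) * (-2*ε))/(1 + Real.exp ((1-2*t)*ε))) t := fun t =>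
    (((hexp t).const_add 1).log (hden t).ne')
  have hd1 : ∀ t : ℝ, HasDerivAt φ (φ' t) t := by
    intro t
    have hp : HasDerivAt (fun t : ℝ => ε^2/2*(t^2 - t) - ε*t)
        (ε^2/2*(2*t-1) - ε) t := by
      have h1 : HasDerivAt (fun t : ℝ => t^2 - t) ((2:ℕ)*t^(2-1) - 1) t :=
        (hasDerivAt_pow 2 t).sub (hasDerivAt_id t)
      have h2 := (h1.const_mul (ε^2/2)).sub ((hasDerivAt_id t).const_mul ε)
      exact h2.congr_deriv (by push_cast; ring)
    have := (hp.sub (hlog t)).add_const (Real.log (1 + Real.exp ε))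
    exact this
  have hd2 : ∀ t : ℝ, HasDerivAt φ' (φ'' t) t := by
    intro t
    have hnum : HasDerivAt (fun t : ℝ => Real.exp ((1-2*t)*ε) * (-2*ε))
        (Real.exp ((1-2*t)*ε) * (-2*ε) * (-2*ε)) t := (hexp t).mul_const _
    have hfrac := hnum.div ((hexp t).const_add 1) (hden t).ne'
    have hp : HasDerivAt (fun t : ℝ => ε^2/2*(2*t-1) - ε) (ε^2/2*2) t := by
      have := (((hasDerivAt_id t).const_mul 2).sub_const 1).const_mul (ε^2/2)
      simpa using (this.sub_const ε)
    have h := hp.sub hfrac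
    refine h.congr_deriv ?_
    rw [hφ'']
    have h0 := (hden t).ne'
    field_simp
    ring
  have hconv : ConvexOn ℝ Set.univ φ := by
    apply convexOn_of_hasDerivWithinAt2_nonneg convex_univ
      (fun x _ => (hd1 x).continuousAt.continuousWithinAt)
      (fun x _ => (hd1 x).hasDerivWithinAt)
      (fun x _ => (hd2 x).hasDerivWithinAt)
    intro x _
    rw [hφ'', sub_nonneg, div_le_iff₀ (by positivity)]
    nlinarith [sq_nonneg (1 - Real.exp ((1-2*x)*ε)), sq_nonneg ε,
      Real.exp_pos ((1-2*x)*ε), sq_nonneg (ε*(1 - Real.exp ((1-2*x)*ε)))]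
  have hab : Real.exp ε * Real.exp (-ε) = 1 := by
    rw [← Real.exp_add]; simp
  have hφ0 : φ 0 = 0 := by
    rw [hφ]; norm_num
  have hφ1 : φ 1 = 0 := by
    have e1 : φ 1 = ε^2/2*((1:ℝ)^2 - 1) - ε*1
        - Real.log (1 + Real.exp (((1:ℝ)-2*1)*ε)) + Real.log (1 + Real.exp ε) := rfl
    rw [e1]
    have h1 : ((1:ℝ)-2*1)*ε = -ε := by norm_num
    have h2 : (1:ℝ) + Real.exp ε = Real.exp ε * (1 + Real.exp (-ε)) := by
      rw [mul_add, mul_one, hab]; ring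
    rw [h1, h2, Real.log_mul (Real.exp_ne_zero ε) (by positivity), Real.log_exp]
    ring
  have hφα : 0 ≤ φ α := by
    have ha : (0:ℝ) ≤ 1 - 1/α := by
      have : 1/α < 1 := by rw [div_lt_one (by linarith)]; linarith
      linarith
    have hb : (0:ℝ) ≤ 1/α := by positivity
    have hab1 : (1 - 1/α) + 1/α = 1 := by ring
    have hkey := hconv.2 (Set.mem_univ (0:ℝ)) (Set.mem_univ α) ha hb hab1
    simp only [smul_eq_mul, mul_zero, zero_add] at hkey
    rw [one_div, inv_mul_cancel₀ (by positivity : α ≠ 0)] at hkey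
    rw [hφ0, hφ1] at hkey
    simp only [mul_zero, zero_add] at hkey
    have hαpos : 0 < α⁻¹ := inv_pos.2 (by linarith)
    by_contra hneg
    push_neg at hneg
    exact absurd hkey (not_le.2 (mul_neg_of_pos_of_neg hαpos hneg))
  have hsplit : Real.exp (α*ε) + Real.exp ((1-α)*ε)
      = Real.exp (α*ε) * (1 + Real.exp ((1-2*α)*ε)) := by
    rw [mul_add, mul_one, ← Real.exp_add]
    congr 2
    ring
  rw [Real.log_div (by positivity) (by positivity), hsplit,
    Real.log_mul (Real.exp_ne_zero _) (by positivity), Real.log_exp]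
  have e2 : φ α = ε^2/2*(α^2 - α) - ε*α
      - Real.log (1 + Real.exp ((1-2*α)*ε)) + Real.log (1 + Real.exp ε) := rfl
  rw [e2] at hφα
  linarith

/-- The exponential mechanism with parameter `ε` is `(α, ε²α/2)`-Rényi differentially
private for every order `α > 1`: for all neighboring datasets `d, d'`, the Rényi
divergence of order `α` between the output distributions is at most `ε²·α/2`. -/
theorem exponential_mechanism_rdp {D Y : Type*} [Fintype Y] (adj : D → D → Prop)
    (q : D → Y → ℝ) (Δ ε : ℝ) (hΔ : 0 < Δ) (hε : 0 < ε)
    (hsens : ∀ d d', adj d d' → ∀ y, |q d y - q d' y| ≤ Δ) :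
    ∀ α : ℝ, 1 < α → ∀ d d', adj d d' →
      (α - 1)⁻¹ *
          Real.log (∑ y, emProb q Δ ε d' y * (emProb q Δ ε d y / emProb q Δ ε d' y) ^ α)
        ≤ ε ^ 2 * α / 2 := by
  intro α hα d d' hadj
  rcases isEmpty_or_nonempty Y with hY | hY
  · rw [Finset.univ_eq_empty, Finset.sum_empty, Real.log_zero, mul_zero]
    positivity
  -- notation
  set x : D → Y → ℝ := fun c y => ε * q c y / (2 * Δ) with hx
  have hZpos : ∀ c : D, 0 < ∑ y, Real.exp (x c y) :=
    fun c => Finset.sum_pos (fun y _ => Real.exp_pos _) Finset.univ_nonempty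
  have hPpos : ∀ c y, 0 < emProb q Δ ε c y := fun c y => div_pos (Real.exp_pos _) (hZpos c)
  -- pointwise sensitivity in the exponent
  have hxy : ∀ y, |x d y - x d' y| ≤ ε / 2 := by
    intro y
    have h1 : x d y - x d' y = ε / (2 * Δ) * (q d y - q d' y) := by rw [hx]; ring
    have hpos : (0:ℝ) < ε / (2 * Δ) := by positivity
    rw [h1, abs_mul, abs_of_pos hpos]
    calc ε / (2 * Δ) * |q d y - q d' y| ≤ ε / (2 * Δ) * Δ :=
          mul_le_mul_of_nonneg_left (hsens d d' hadj y) hpos.le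
      _ = ε / 2 := by field_simp
  -- normalizing constants are within exp(ε/2) of each other
  have hZcmp : ∀ c c' : D, (∀ y, x c y ≤ x c' y + ε/2) →
      (∑ y, Real.exp (x c y)) ≤ Real.exp (ε/2) * ∑ y, Real.exp (x c' y) := by
    intro c c' hcc
    rw [Finset.mul_sum]
    refine Finset.sum_le_sum fun y _ => ?_
    calc Real.exp (x c y) ≤ Real.exp (x c' y + ε/2) := Real.exp_le_exp.2 (hcc y)
      _ = Real.exp (ε/2) * Real.exp (x c' y) := by rw [← Real.exp_add]; ring_nf
  have hZ1 : (∑ y, Real.exp (x d' y)) ≤ Real.exp (ε/2) * ∑ y, Real.exp (x d y) :=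
    hZcmp d' d fun y => by have := abs_le.1 (hxy y); linarith
  have hZ2 : (∑ y, Real.exp (x d y)) ≤ Real.exp (ε/2) * ∑ y, Real.exp (x d' y) :=
    hZcmp d d' fun y => by have := abs_le.1 (hxy y); linarith
  -- ratio representation and bounds
  have hrep : ∀ y, emProb q Δ ε d y / emProb q Δ ε d' y
      = Real.exp (x d y - x d' y) * ((∑ y', Real.exp (x d' y')) / (∑ y', Real.exp (x d y'))) := by
    intro y
    rw [Real.exp_sub]
    unfold emProb
    simp only [hx]
    field_simp
  have hub : ∀ y, emProb q Δ ε d y / emProb q Δ ε d' y ≤ Real.exp ε := by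
    intro y
    rw [hrep y]
    have h1 : Real.exp (x d y - x d' y) ≤ Real.exp (ε/2) :=
      Real.exp_le_exp.2 (by have := abs_le.1 (hxy y); linarith)
    have h2 : (∑ y', Real.exp (x d' y')) / (∑ y', Real.exp (x d y')) ≤ Real.exp (ε/2) := by
      rw [div_le_iff₀ (hZpos d)]; exact hZ1
    calc Real.exp (x d y - x d' y) * ((∑ y', Real.exp (x d' y')) / (∑ y', Real.exp (x d y')))
        ≤ Real.exp (ε/2) * Real.exp (ε/2) :=
          mul_le_mul h1 h2 (by positivity) (Real.exp_pos _).le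
      _ = Real.exp ε := by rw [← Real.exp_add]; ring_nf
  have hlb : ∀ y, Real.exp (-ε) ≤ emProb q Δ ε d y / emProb q Δ ε d' y := by
    intro y
    rw [hrep y]
    have h1 : Real.exp (-(ε/2)) ≤ Real.exp (x d y - x d' y) :=
      Real.exp_le_exp.2 (by have := abs_le.1 (hxy y); linarith)
    have h2 : Real.exp (-(ε/2)) ≤ (∑ y', Real.exp (x d' y')) / (∑ y', Real.exp (x d y')) := by
      rw [le_div_iff₀ (hZpos d)]
      have := mul_le_mul_of_nonneg_left hZ2 (Real.exp_pos (-(ε/2))).le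
      calc Real.exp (-(ε/2)) * ∑ y', Real.exp (x d y')
          ≤ Real.exp (-(ε/2)) * (Real.exp (ε/2) * ∑ y', Real.exp (x d' y')) := this
        _ = ∑ y', Real.exp (x d' y') := by rw [← mul_assoc, ← Real.exp_add]; simp
    calc Real.exp (-ε) = Real.exp (-(ε/2)) * Real.exp (-(ε/2)) := by
          rw [← Real.exp_add]; ring_nf
      _ ≤ _ := mul_le_mul h1 h2 (Real.exp_pos _).le (Real.exp_pos _).le
  -- the two normalization identities
  have hsum1 : ∀ c : D, ∑ y, emProb q Δ ε c y = 1 := by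
    intro c
    unfold emProb
    rw [← Finset.sum_div]
    exact div_self (hZpos c).ne'
  have hsum2 : ∑ y, emProb q Δ ε d' y * (emProb q Δ ε d y / emProb q Δ ε d' y) = 1 := by
    have h : ∀ y, emProb q Δ ε d' y * (emProb q Δ ε d y / emProb q Δ ε d' y)
        = emProb q Δ ε d y := fun y => by
      rw [mul_comm, div_mul_cancel₀ _ (hPpos d' y).ne']
    simp_rw [h]
    exact hsum1 d
  -- chord bound from convexity of rpow
  set x₁ : ℝ := Real.exp (-ε) with hx₁
  set x₂ : ℝ := Real.exp ε with hx₂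
  have hx12 : x₁ < x₂ := Real.exp_lt_exp.2 (by linarith)
  have hDpos : (0:ℝ) < x₂ - x₁ := sub_pos.2 hx12
  have chord : ∀ y, (emProb q Δ ε d y / emProb q Δ ε d' y) ^ α
      ≤ (x₂ - emProb q Δ ε d y / emProb q Δ ε d' y) / (x₂ - x₁) * x₁ ^ α
        + (emProb q Δ ε d y / emProb q Δ ε d' y - x₁) / (x₂ - x₁) * x₂ ^ α := by
    intro y
    set r := emProb q Δ ε d y / emProb q Δ ε d' y with hr
    have ha : (0:ℝ) ≤ (x₂ - r) / (x₂ - x₁) := div_nonneg (by linarith [hub y]) hDpos.le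
    have hb : (0:ℝ) ≤ (r - x₁) / (x₂ - x₁) := div_nonneg (by linarith [hlb y]) hDpos.le
    have hab : (x₂ - r) / (x₂ - x₁) + (r - x₁) / (x₂ - x₁) = 1 := by
      field_simp
      ring
    have hc := (convexOn_rpow hα.le).2 (Set.mem_Ici.2 (Real.exp_pos (-ε)).le)
      (Set.mem_Ici.2 (Real.exp_pos ε).le) ha hb hab
    simp only [smul_eq_mul] at hc
    have harg : (x₂ - r) / (x₂ - x₁) * x₁ + (r - x₁) / (x₂ - x₁) * x₂ = r := by
      field_simp
      ring
    rwa [harg] at hc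
  -- sum bound
  have hS : (∑ y, emProb q Δ ε d' y * (emProb q Δ ε d y / emProb q Δ ε d' y) ^ α)
      ≤ ((x₂ - 1) * x₁ ^ α + (1 - x₁) * x₂ ^ α) / (x₂ - x₁) := by
    have step1 : (∑ y, emProb q Δ ε d' y * (emProb q Δ ε d y / emProb q Δ ε d' y) ^ α)
        ≤ ∑ y, emProb q Δ ε d' y *
            ((x₂ - emProb q Δ ε d y / emProb q Δ ε d' y) / (x₂ - x₁) * x₁ ^ α
              + (emProb q Δ ε d y / emProb q Δ ε d' y - x₁) / (x₂ - x₁) * x₂ ^ α) :=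
      Finset.sum_le_sum fun y _ => mul_le_mul_of_nonneg_left (chord y) (hPpos d' y).le
    have step2 : (∑ y, emProb q Δ ε d' y *
            ((x₂ - emProb q Δ ε d y / emProb q Δ ε d' y) / (x₂ - x₁) * x₁ ^ α
              + (emProb q Δ ε d y / emProb q Δ ε d' y - x₁) / (x₂ - x₁) * x₂ ^ α))
        = (x₁ ^ α * x₂ - x₂ ^ α * x₁) / (x₂ - x₁) * (∑ y, emProb q Δ ε d' y)
          + (x₂ ^ α - x₁ ^ α) / (x₂ - x₁)
            * (∑ y, emProb q Δ ε d' y * (emProb q Δ ε d y / emProb q Δ ε d' y)) := by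
      rw [Finset.mul_sum, Finset.mul_sum, ← Finset.sum_add_distrib]
      exact Finset.sum_congr rfl fun y _ => by ring
    rw [step2, hsum1 d', hsum2, mul_one, mul_one] at step1
    calc (∑ y, emProb q Δ ε d' y * (emProb q Δ ε d y / emProb q Δ ε d' y) ^ α)
        ≤ (x₁ ^ α * x₂ - x₂ ^ α * x₁) / (x₂ - x₁) + (x₂ ^ α - x₁ ^ α) / (x₂ - x₁) := step1
      _ = ((x₂ - 1) * x₁ ^ α + (1 - x₁) * x₂ ^ α) / (x₂ - x₁) := by ring
  -- identify the bound with the scalar expression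
  have hBeq : ((x₂ - 1) * x₁ ^ α + (1 - x₁) * x₂ ^ α) / (x₂ - x₁)
      = (Real.exp (α * ε) + Real.exp ((1 - α) * ε)) / (1 + Real.exp ε) := by
    have hp1 : x₁ ^ α = Real.exp (-ε * α) := by rw [hx₁, ← Real.exp_mul]
    have hp2 : x₂ ^ α = Real.exp (ε * α) := by rw [hx₂, ← Real.exp_mul]
    have hab : Real.exp ε * Real.exp (-ε) = 1 := by rw [← Real.exp_add]; simp
    have he1 : Real.exp (α * ε) = Real.exp (ε * α) := by ring_nf
    have he2 : Real.exp ((1 - α) * ε) = Real.exp ε * Real.exp (-ε * α) := by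
      rw [← Real.exp_add]; ring_nf
    rw [div_eq_div_iff hDpos.ne' (by positivity), hp1, hp2, he1, he2, hx₁, hx₂]
    linear_combination (Real.exp (-ε * α) - Real.exp (ε * α)) * hab
  -- conclude
  have hSpos : 0 < ∑ y, emProb q Δ ε d' y * (emProb q Δ ε d y / emProb q Δ ε d' y) ^ α :=
    Finset.sum_pos (fun y _ => mul_pos (hPpos d' y)
      (Real.rpow_pos_of_pos (div_pos (hPpos d y) (hPpos d' y)) α)) Finset.univ_nonempty
  have hlogS : Real.log (∑ y, emProb q Δ ε d' y * (emProb q Δ ε d y / emProb q Δ ε d' y) ^ α)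
      ≤ ε ^ 2 * (α ^ 2 - α) / 2 := by
    calc Real.log (∑ y, emProb q Δ ε d' y * (emProb q Δ ε d y / emProb q Δ ε d' y) ^ α)
        ≤ Real.log ((Real.exp (α * ε) + Real.exp ((1 - α) * ε)) / (1 + Real.exp ε)) := by
          apply (Real.log_le_log_iff hSpos (by positivity)).2
          rw [← hBeq]; exact hS
      _ ≤ ε ^ 2 * (α ^ 2 - α) / 2 := em_scalar ε α hε hα
  have hinv : (0:ℝ) ≤ (α - 1)⁻¹ := inv_nonneg.2 (by linarith)
  have := mul_le_mul_of_nonneg_left hlogS hinv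
  have heq : (α - 1)⁻¹ * (ε ^ 2 * (α ^ 2 - α) / 2) = ε ^ 2 * α / 2 := by
    have hne : α - 1 ≠ 0 := by intro h; rw [sub_eq_zero] at h; linarith [h.symm]
    field_simp
  linarith [this, heq.le, heq.ge]
end
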